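/- Let f(p) = p·log2(1 + ρ·K/p²) for p > 0 with ρ, K > 0 fixed. Then f is strictly increasing in p on the region where ρK/p² is sufficiently large; in particular, for any integer N ≥ 2, if ρK ≥ N² · (2^{2N} − 1) then f(N) > f(q) for all integers 1 ≤ q < N. -/

import Mathlib

set_option maxHeartbeats 1000000


/-- For `f p = p · log2 (1 + ρK/p²)`: at high SNR full rank is optimal. For any
integer `N ≥ 2`, if `ρK ≥ N²(2^(2N) − 1)` then `f N > f q` for every integer
`1 ≤ q < N`. -/
theorem full_rank_optimal_high_snr (ρ K : ℝ) (hρ : 0 < ρ) (hK : 0 < K)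
    (N : ℕ) (hN : 2 ≤ N)
    (hsnr : (N : ℝ) ^ 2 * (2 ^ (2 * N) - 1) ≤ ρ * K) :
    ∀ q : ℕ, 1 ≤ q → q < N →
      (q : ℝ) * Real.logb 2 (1 + ρ * K / (q : ℝ) ^ 2) <
        (N : ℝ) * Real.logb 2 (1 + ρ * K / (N : ℝ) ^ 2) := by
  intro q hq1 hqN
  set x : ℝ := ρ * K with hxdef
  have hx : 0 < x := mul_pos hρ hK
  have hNpos : (0:ℝ) < (N:ℝ) := by positivity
  have hqpos : (0:ℝ) < (q:ℝ) := by exact_mod_cast Nat.pos_of_ne_zero (by omega)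
  have hqN' : (q:ℝ) < (N:ℝ) := by exact_mod_cast hqN
  have hN2 : (2:ℝ) ≤ (N:ℝ) := by exact_mod_cast hN
  set a : ℝ := Real.logb 2 (1 + x / (N:ℝ)^2) with hadef
  -- Step A : 2N ≤ a
  have hpow_ge : (1:ℝ) ≤ (2:ℝ)^(2*N) := one_le_pow₀ (by norm_num)
  have hA1 : (2:ℝ)^(2*N) ≤ 1 + x / (N:ℝ)^2 := by
    have : (2:ℝ)^(2*N) - 1 ≤ x / (N:ℝ)^2 := by
      rw [le_div_iff₀ (by positivity)]
      nlinarith [hsnr]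
    linarith
  have ha : 2 * (N:ℝ) ≤ a := by
    have h2 : Real.logb 2 ((2:ℝ)^(2*N)) ≤ a := by
      exact Real.logb_le_logb_of_le (by norm_num) (by positivity) hA1
    have h3 : Real.logb 2 ((2:ℝ)^(2*N)) = 2 * (N:ℝ) := by
      rw [Real.logb_pow, Real.logb_self_eq_one (by norm_num)]
      push_cast; ring
    linarith [h3 ▸ h2]
  -- Step B : logb 2 (1 + x/q²) ≤ 2 logb 2 (N/q) + a
  have hr : (1:ℝ) < (N:ℝ)/(q:ℝ) := (one_lt_div hqpos).mpr hqN'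
  have hrpos : (0:ℝ) < (N:ℝ)/(q:ℝ) := by linarith
  have hbase : (0:ℝ) < 1 + x / (N:ℝ)^2 := by positivity
  have hB1 : 1 + x / (q:ℝ)^2 ≤ ((N:ℝ)/(q:ℝ))^2 * (1 + x / (N:ℝ)^2) := by
    have : ((N:ℝ)/(q:ℝ))^2 * (1 + x / (N:ℝ)^2)
        = (N:ℝ)^2/(q:ℝ)^2 + x/(q:ℝ)^2 := by
      field_simp
    rw [this]
    have : (1:ℝ) ≤ (N:ℝ)^2/(q:ℝ)^2 := by
      rw [le_div_iff₀ (by positivity)]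
      nlinarith
    linarith
  have hB : Real.logb 2 (1 + x / (q:ℝ)^2)
      ≤ 2 * Real.logb 2 ((N:ℝ)/(q:ℝ)) + a := by
    have h1 : Real.logb 2 (1 + x / (q:ℝ)^2)
        ≤ Real.logb 2 (((N:ℝ)/(q:ℝ))^2 * (1 + x / (N:ℝ)^2)) :=
      Real.logb_le_logb_of_le (by norm_num) (by positivity) hB1
    have h2 : Real.logb 2 (((N:ℝ)/(q:ℝ))^2 * (1 + x / (N:ℝ)^2))
        = 2 * Real.logb 2 ((N:ℝ)/(q:ℝ)) + a := by
      rw [Real.logb_mul (by positivity) (by positivity), Real.logb_pow]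
      push_cast
      ring
    linarith [h2 ▸ h1]
  -- Step C : logb 2 (N/q) < (N/q - 1) / log 2
  have hlog2 : (0:ℝ) < Real.log 2 := Real.log_pos (by norm_num)
  have hC : Real.logb 2 ((N:ℝ)/(q:ℝ)) < ((N:ℝ)/(q:ℝ) - 1) / Real.log 2 := by
    rw [Real.logb, div_lt_div_iff_of_pos_right hlog2]
    exact Real.log_lt_sub_one_of_pos hrpos (ne_of_gt hr)
  -- Step D : combine
  have hlog2half : (1:ℝ)/2 < Real.log 2 := by
    have := Real.log_two_gt_d9
    linarith
  have hD : (q:ℝ) * (2 * Real.logb 2 ((N:ℝ)/(q:ℝ))) < ((N:ℝ) - q) * a := by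
    have h1 : (q:ℝ) * (2 * Real.logb 2 ((N:ℝ)/(q:ℝ)))
        < (q:ℝ) * (2 * (((N:ℝ)/(q:ℝ) - 1) / Real.log 2)) := by
      apply mul_lt_mul_of_pos_left _ hqpos
      linarith
    have h2 : (q:ℝ) * (2 * (((N:ℝ)/(q:ℝ) - 1) / Real.log 2))
        = 2 * ((N:ℝ) - q) / Real.log 2 := by
      field_simp
    have h3 : 2 * ((N:ℝ) - q) / Real.log 2 < 2 * (N:ℝ) * ((N:ℝ) - q) := by
      rw [div_lt_iff₀ hlog2]
      have hNq : (0:ℝ) < (N:ℝ) - q := by linarith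
      have hNlog : (1:ℝ) < (N:ℝ) * Real.log 2 := by
        have h := mul_le_mul_of_nonneg_right hN2 (le_of_lt hlog2)
        linarith
      have h := mul_lt_mul_of_pos_left hNlog (by linarith : (0:ℝ) < 2*((N:ℝ)-q))
      nlinarith
    have h4 : 2 * (N:ℝ) * ((N:ℝ) - q) ≤ ((N:ℝ) - q) * a := by
      have hNq : (0:ℝ) ≤ (N:ℝ) - q := by linarith
      have h := mul_le_mul_of_nonneg_left ha hNq
      nlinarith
    linarith [h2 ▸ h1]
  calc (q:ℝ) * Real.logb 2 (1 + x / (q:ℝ)^2)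
      ≤ (q:ℝ) * (2 * Real.logb 2 ((N:ℝ)/(q:ℝ)) + a) :=
        mul_le_mul_of_nonneg_left hB (le_of_lt hqpos)
    _ = (q:ℝ) * (2 * Real.logb 2 ((N:ℝ)/(q:ℝ))) + (q:ℝ) * a := by ring
    _ < ((N:ℝ) - q) * a + (q:ℝ) * a := by linarith
    _ = (N:ℝ) * a := by ring
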